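/- A finite form of Lebesgue's identity: for every nonnegative integer n, ∑_{k=0}^n [n choose k]_q · q^{k(k+1)/2} / (a q^k; q)_{n+1} = (−q;q)_n / (a;q²)_{n+1}. -/

import Mathlib

set_option maxHeartbeats 2000000


/-- The q-shifted factorial `(x;q)_n`. -/
def qPoch {K : Type*} [Field K] (q x : K) (n : ℕ) : K :=
  ∏ j ∈ Finset.range n, (1 - x * q ^ j)

/-- The Gaussian binomial coefficient `[n choose k]_q`, zero for `k > n`. -/
def qBinom {K : Type*} [Field K] (q : K) (n k : ℕ) : K :=
  if k ≤ n then qPoch q q n / (qPoch q q k * qPoch q q (n - k)) else 0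

section Aux

variable {K : Type*} [Field K]

lemma qPoch_zero (q x : K) : qPoch q x 0 = 1 := by simp [qPoch]

lemma qPoch_succ (q x : K) (n : ℕ) :
    qPoch q x (n + 1) = qPoch q x n * (1 - x * q ^ n) :=
  Finset.prod_range_succ _ _

lemma qPoch_succ' (q x : K) (n : ℕ) :
    qPoch q x (n + 1) = (1 - x) * qPoch q (x * q) n := by
  rw [qPoch, Finset.prod_range_succ', pow_zero, mul_one, mul_comm]
  unfold qPoch
  congr 1
  refine Finset.prod_congr rfl (fun i _ => ?_)
  ring

lemma qPoch_shift (q x : K) (n : ℕ) :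
    (1 - x) * qPoch q (x * q) (n + 1) = qPoch q x (n + 1) * (1 - x * q ^ (n + 1)) := by
  rw [← qPoch_succ', qPoch_succ]

lemma qPoch_add (q x : K) (m l : ℕ) :
    qPoch q x (m + l) = qPoch q x m * qPoch q (x * q ^ m) l := by
  unfold qPoch
  rw [Finset.prod_range_add]
  congr 1
  refine Finset.prod_congr rfl (fun i _ => ?_)
  rw [pow_add]; ring

lemma qPoch_prefix_ne {q x : K} {n : ℕ} (h : qPoch q x n ≠ 0) {m : ℕ} (hm : m ≤ n) :
    qPoch q x m ≠ 0 := by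
  obtain ⟨l, rfl⟩ := Nat.exists_eq_add_of_le hm
  rw [qPoch_add] at h
  exact left_ne_zero_of_mul h

lemma qPoch_a_ne {q a : K} (ha : ∀ j : ℕ, 1 - a * q ^ j ≠ 0) (i m : ℕ) :
    qPoch q (a * q ^ i) m ≠ 0 := by
  rw [qPoch]
  refine Finset.prod_ne_zero_iff.2 (fun j _ => ?_)
  have h : a * q ^ i * q ^ j = a * q ^ (i + j) := by rw [pow_add]; ring
  rw [h]; exact ha _

lemma qPoch_a_ne' {q a : K} (ha : ∀ j : ℕ, 1 - a * q ^ j ≠ 0) (m : ℕ) :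
    qPoch q a m ≠ 0 := by
  have := qPoch_a_ne ha 0 m
  simpa using this

lemma one_sub_pow_ne {q : K} {n : ℕ} (h : qPoch q q n ≠ 0) {i : ℕ} (h1 : 1 ≤ i)
    (h2 : i ≤ n) : (1 : K) - q ^ i ≠ 0 := by
  rw [qPoch] at h
  have hmem : i - 1 ∈ Finset.range n := by
    simp only [Finset.mem_range]; omega
  have hne := Finset.prod_ne_zero_iff.1 h (i - 1) hmem
  have hpow : q * q ^ (i - 1) = q ^ i := by
    rw [← pow_succ']
    congr 1
    omega
  rwa [hpow] at hne

lemma qPoch_q_succ (q : K) (n : ℕ) :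
    qPoch q q (n + 1) = qPoch q q n * (1 - q ^ (n + 1)) := by
  rw [qPoch_succ, ← pow_succ']

lemma tri_succ (j : ℕ) : (j + 1) * (j + 1 + 1) / 2 = j * (j + 1) / 2 + (j + 1) := by
  have h2 : (j + 1) * (j + 1 + 1) = j * (j + 1) + (j + 1) * 2 := by ring
  rw [h2, Nat.add_mul_div_right _ _ (by norm_num)]

/-- Certificate function for the telescoping (q-Zeilberger) step. -/
def lebAux (q a : K) (n k : ℕ) : K :=
  if k = 0 then 0 else
    q ^ (n + 1) * q ^ ((k - 1) * k / 2) * qBinom q n (k - 1) /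
      ((1 - a * q ^ (2 * n + 2)) * qPoch q (a * q ^ k) (n + 1))

lemma key_step (q a : K) (n : ℕ) (ha : ∀ j : ℕ, 1 - a * q ^ j ≠ 0)
    (hqq : qPoch q q (n + 1) ≠ 0) (k : ℕ) (hk : k ≤ n + 1) :
    qBinom q (n + 1) k * q ^ (k * (k + 1) / 2) / qPoch q (a * q ^ k) (n + 1 + 1)
      = (1 + q ^ (n + 1)) / (1 - a * q ^ (2 * n + 2)) *
          (qBinom q n k * q ^ (k * (k + 1) / 2) / qPoch q (a * q ^ k) (n + 1))
        + (lebAux q a n k - lebAux q a n (k + 1)) := by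
  have hd : (1 : K) - a * q ^ (2 * n + 2) ≠ 0 := ha _
  have hqn : qPoch q q n ≠ 0 := qPoch_prefix_ne hqq (Nat.le_succ n)
  cases k with
  | zero =>
      have ha0 : (1 : K) - a ≠ 0 := by have := ha 0; simpa using this
      have han1 : (1 : K) - a * q ^ (n + 1) ≠ 0 := ha (n + 1)
      have hPa1 : qPoch q a (n + 1) ≠ 0 := qPoch_a_ne' ha (n + 1)
      have hb1 : qBinom q (n + 1) 0 = 1 := by
        rw [qBinom, if_pos (Nat.zero_le _)]
        simp [qPoch_zero, div_self hqq]
      have hb2 : qBinom q n 0 = 1 := by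
        rw [qBinom, if_pos (Nat.zero_le _)]
        simp [qPoch_zero, div_self hqn]
      have e1 : qPoch q (a * q) (n + 1)
          = qPoch q a (n + 1) * (1 - a * q ^ (n + 1)) / (1 - a) := by
        rw [eq_div_iff ha0, mul_comm]
        exact qPoch_shift q a n
      have e2 : qPoch q a (n + 1 + 1) = qPoch q a (n + 1) * (1 - a * q ^ (n + 1)) :=
        qPoch_succ q a (n + 1)
      simp only [lebAux, if_pos rfl, if_neg (Nat.one_ne_zero), pow_zero, mul_one, one_mul,
        pow_one, hb1, hb2, Nat.zero_mul, Nat.zero_div, Nat.sub_self, if_true, eq_self_iff_true,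
        Nat.zero_add, zero_add]
      rw [e1, e2]
      set Pa := qPoch q a (n + 1) with hPadef
      clear_value Pa
      have hs : q ^ (2 * n + 2) = q ^ (n + 1) * q ^ (n + 1) := by
        rw [← pow_add]; congr 1; omega
      rw [hs] at hd ⊢
      generalize hu : q ^ (n + 1) = u
      rw [hu] at hd han1
      have hflat : ∀ x : K, x / ((1 - a * (u * u)) * (Pa * (1 - a * u) / (1 - a)))
          = x * (1 - a) / ((1 - a * (u * u)) * (Pa * (1 - a * u))) := fun x => by
        rw [← mul_div_assoc, div_div_eq_mul_div]
      rw [hflat]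
      have hd' : (1 : K) - a * u ^ 2 ≠ 0 := by rwa [sq]
      field_simp
      ring
  | succ j =>
      by_cases hcase : j + 1 ≤ n
      · -- generic middle case : k = j + 1 ≤ n
        obtain ⟨m, rfl⟩ : ∃ m, n = j + m + 1 := ⟨n - j - 1, by omega⟩
        have hqj : qPoch q q j ≠ 0 := qPoch_prefix_ne hqq (by omega)
        have hqm : qPoch q q m ≠ 0 := qPoch_prefix_ne hqq (by omega)
        have h1j : (1 : K) - q ^ (j + 1) ≠ 0 := one_sub_pow_ne hqq (by omega) (by omega)
        have h1m : (1 : K) - q ^ (m + 1) ≠ 0 := one_sub_pow_ne hqq (by omega) (by omega)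
        have hP : qPoch q (a * q ^ (j + 1)) (j + m + 1 + 1) ≠ 0 :=
          qPoch_a_ne ha (j + 1) (j + m + 1 + 1)
        have haj : (1 : K) - a * q ^ (j + 1) ≠ 0 := ha (j + 1)
        have hd2 : (1 : K) - a * q ^ (j + 1) * q ^ (j + m + 1 + 1) ≠ 0 := by
          have h := ha (2 * j + m + 3)
          have he : a * q ^ (2 * j + m + 3) = a * q ^ (j + 1) * q ^ (j + m + 1 + 1) := by
            rw [show 2 * j + m + 3 = (j + 1) + (j + m + 1 + 1) from by omega, pow_add]
            ring
          rwa [he] at h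
        have hb1 : qBinom q (j + m + 1 + 1) (j + 1)
            = qPoch q q (j + m + 1 + 1) / (qPoch q q (j + 1) * qPoch q q (m + 1)) := by
          rw [qBinom, if_pos (by omega), show j + m + 1 + 1 - (j + 1) = m + 1 from by omega]
        have hb2 : qBinom q (j + m + 1) (j + 1)
            = qPoch q q (j + m + 1) / (qPoch q q (j + 1) * qPoch q q m) := by
          rw [qBinom, if_pos (by omega), show j + m + 1 - (j + 1) = m from by omega]
        have hb3 : qBinom q (j + m + 1) j
            = qPoch q q (j + m + 1) / (qPoch q q j * qPoch q q (m + 1)) := by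
          rw [qBinom, if_pos (by omega), show j + m + 1 - j = m + 1 from by omega]
        have hA1 : qPoch q q (j + m + 1 + 1)
            = qPoch q q (j + m + 1) * (1 - q ^ (j + m + 1 + 1)) := qPoch_q_succ q (j + m + 1)
        have hA2 : qPoch q q (j + 1) = qPoch q q j * (1 - q ^ (j + 1)) := qPoch_q_succ q j
        have hA3 : qPoch q q (m + 1) = qPoch q q m * (1 - q ^ (m + 1)) := qPoch_q_succ q m
        have hP2 : qPoch q (a * q ^ (j + 1)) (j + m + 1 + 1 + 1)
            = qPoch q (a * q ^ (j + 1)) (j + m + 1 + 1) *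
                (1 - a * q ^ (j + 1) * q ^ (j + m + 1 + 1)) :=
          qPoch_succ q _ (j + m + 1 + 1)
        have hP3 : qPoch q (a * q ^ (j + 1 + 1)) (j + m + 1 + 1)
            = qPoch q (a * q ^ (j + 1)) (j + m + 1 + 1) *
                (1 - a * q ^ (j + 1) * q ^ (j + m + 1 + 1)) / (1 - a * q ^ (j + 1)) := by
          rw [eq_div_iff haj, mul_comm]
          have h := qPoch_shift q (a * q ^ (j + 1)) (j + m + 1)
          rw [show a * q ^ (j + 1) * q = a * q ^ (j + 1 + 1) from by ring] at h
          exact h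
        simp only [lebAux, if_neg (Nat.succ_ne_zero j), if_neg (Nat.succ_ne_zero (j + 1)),
          Nat.add_sub_cancel]
        have htri : q ^ ((j + 1) * (j + 1 + 1) / 2) = q ^ (j * (j + 1) / 2) * q ^ (j + 1) := by
          rw [tri_succ j]; exact pow_add q _ _
        rw [htri, hP2, hP3, hb1, hb2, hb3, hA1, hA2, hA3]
        set P := qPoch q (a * q ^ (j + 1)) (j + m + 1 + 1) with hPdef
        set An := qPoch q q (j + m + 1) with hAndef
        set Aj := qPoch q q j with hAjdef
        set Am := qPoch q q m with hAmdef
        clear_value P An Aj Am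
        clear hb1 hb2 hb3 hA1 hA2 hA3 hP2 hP3 hqq hk hcase
        have hs1 : q ^ (j + m + 1 + 1) = q ^ (j + 1) * q ^ (m + 1) := by
          rw [← pow_add]; congr 1; omega
        have hs2 : q ^ (2 * (j + m + 1) + 2)
            = q ^ (j + 1) * q ^ (m + 1) * (q ^ (j + 1) * q ^ (m + 1)) := by
          rw [← pow_add, ← pow_add]; congr 1; omega
        rw [hs1] at hd2 ⊢
        rw [hs2] at hd ⊢
        generalize hu : q ^ (j + 1) = u
        generalize hw : q ^ (m + 1) = w
        generalize ht : q ^ (j * (j + 1) / 2) = t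
        rw [hu] at h1j haj hd hd2
        rw [hw] at h1m hd hd2
        have hflat : ∀ x : K,
            x / ((1 - a * (u * w * (u * w))) * (P * (1 - a * u * (u * w)) / (1 - a * u)))
              = x * (1 - a * u) /
                  ((1 - a * (u * w * (u * w))) * (P * (1 - a * u * (u * w)))) := fun x => by
          rw [← mul_div_assoc, div_div_eq_mul_div]
        rw [hflat]
        simp only [div_mul_eq_mul_div, mul_div_assoc', div_div]
        rw [div_sub_div _ _ (by apply_rules [mul_ne_zero]) (by apply_rules [mul_ne_zero]),
          div_add_div _ _ (by apply_rules [mul_ne_zero]) (by apply_rules [mul_ne_zero]),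
          div_eq_div_iff (by apply_rules [mul_ne_zero]) (by apply_rules [mul_ne_zero])]
        ring
      · -- top edge case : k = n + 1
        have hj : n = j := by omega
        subst hj
        have hP : qPoch q (a * q ^ (n + 1)) (n + 1) ≠ 0 := qPoch_a_ne ha (n + 1) (n + 1)
        have hd2 : (1 : K) - a * q ^ (n + 1) * q ^ (n + 1) ≠ 0 := by
          have h := ha (2 * n + 2)
          have he : a * q ^ (2 * n + 2) = a * q ^ (n + 1) * q ^ (n + 1) := by
            rw [show 2 * n + 2 = (n + 1) + (n + 1) from by omega, pow_add]
            ring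
          rwa [he] at h
        have hb1 : qBinom q (n + 1) (n + 1) = 1 := by
          rw [qBinom, if_pos le_rfl]
          simp [qPoch_zero, Nat.sub_self, div_self hqq]
        have hb2 : qBinom q n (n + 1) = 0 := by
          rw [qBinom, if_neg (by omega)]
        have hb3 : qBinom q n n = 1 := by
          rw [qBinom, if_pos le_rfl]
          simp [qPoch_zero, Nat.sub_self, div_self hqn]
        have hP2 : qPoch q (a * q ^ (n + 1)) (n + 1 + 1)
            = qPoch q (a * q ^ (n + 1)) (n + 1) * (1 - a * q ^ (n + 1) * q ^ (n + 1)) :=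
          qPoch_succ q _ (n + 1)
        simp only [lebAux, if_neg (Nat.succ_ne_zero n), if_neg (Nat.succ_ne_zero (n + 1)),
          Nat.add_sub_cancel, hb1, hb2, hb3]
        have htri : q ^ ((n + 1) * (n + 1 + 1) / 2) = q ^ (n * (n + 1) / 2) * q ^ (n + 1) := by
          rw [tri_succ n]; exact pow_add q _ _
        rw [htri, hP2]
        set P := qPoch q (a * q ^ (n + 1)) (n + 1) with hPdef
        clear_value P
        clear hqq hk hcase hb1 hb2 hb3 hP2
        have hs : q ^ (2 * n + 2) = q ^ (n + 1) * q ^ (n + 1) := by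
          rw [← pow_add]; congr 1; omega
        rw [hs] at hd ⊢
        generalize hu : q ^ (n + 1) = u
        generalize ht : q ^ (n * (n + 1) / 2) = t
        rw [hu] at hd hd2
        field_simp
        ring

end Aux

/-- A finite form of Lebesgue's identity (and of Jacobi's triple product identity). -/
theorem finite_lebesgue {K : Type*} [Field K] (q a : K) (n : ℕ)
    (hq : q ≠ 0) (hqq : qPoch q q n ≠ 0)
    (ha : ∀ j : ℕ, 1 - a * q ^ j ≠ 0) :
    ∑ k ∈ Finset.range (n + 1),
      qBinom q n k * q ^ (k * (k + 1) / 2) / qPoch q (a * q ^ k) (n + 1)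
    = qPoch q (-q) n / qPoch (q ^ 2) a (n + 1) := by
  revert hqq
  induction n with
  | zero =>
      intro hqq
      norm_num [Finset.sum_range_one, qBinom, qPoch]
  | succ n IH =>
      intro hqq
      have hqn : qPoch q q n ≠ 0 := qPoch_prefix_ne hqq (Nat.le_succ n)
      have IH' := IH hqn
      have hd : (1 : K) - a * q ^ (2 * n + 2) ≠ 0 := ha _
      have hQ2 : ∀ m : ℕ, qPoch (q ^ 2) a m ≠ 0 := by
        intro m
        rw [qPoch]
        refine Finset.prod_ne_zero_iff.2 (fun i _ => ?_)
        rw [← pow_mul]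
        exact ha (2 * i)
      have hsum : (∑ k ∈ Finset.range (n + 1 + 1),
            qBinom q (n + 1) k * q ^ (k * (k + 1) / 2) / qPoch q (a * q ^ k) (n + 1 + 1))
          = ∑ k ∈ Finset.range (n + 1 + 1),
              ((1 + q ^ (n + 1)) / (1 - a * q ^ (2 * n + 2)) *
                (qBinom q n k * q ^ (k * (k + 1) / 2) / qPoch q (a * q ^ k) (n + 1))
               + (lebAux q a n k - lebAux q a n (k + 1))) :=
        Finset.sum_congr rfl (fun k hk =>
          key_step q a n ha hqq k (by have := Finset.mem_range.1 hk; omega))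
      rw [hsum, Finset.sum_add_distrib, Finset.sum_range_sub' (lebAux q a n) (n + 1 + 1),
        ← Finset.mul_sum]
      have hb0 : lebAux q a n 0 = 0 := by simp [lebAux]
      have hbtop : lebAux q a n (n + 1 + 1) = 0 := by
        rw [lebAux, if_neg (by omega), show n + 1 + 1 - 1 = n + 1 from rfl,
          qBinom, if_neg (by omega)]
        simp
      rw [hb0, hbtop, Finset.sum_range_succ]
      have hlast : qBinom q n (n + 1) * q ^ ((n + 1) * (n + 1 + 1) / 2)
          / qPoch q (a * q ^ (n + 1)) (n + 1) = 0 := by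
        rw [qBinom, if_neg (by omega)]
        simp
      rw [hlast, add_zero, IH']
      have hnegq : qPoch q (-q) (n + 1) = qPoch q (-q) n * (1 + q ^ (n + 1)) := by
        rw [qPoch_succ]
        congr 1
        rw [pow_succ]
        ring
      have hq2 : qPoch (q ^ 2) a (n + 1 + 1)
          = qPoch (q ^ 2) a (n + 1) * (1 - a * q ^ (2 * n + 2)) := by
        rw [qPoch_succ]
        congr 1
        rw [← pow_mul, show 2 * (n + 1) = 2 * n + 2 from by ring]
      rw [hnegq, hq2]
      have hQ2n : qPoch (q ^ 2) a (n + 1) ≠ 0 := hQ2 (n + 1)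
      set R := qPoch q (-q) n with hRdef
      set Q2 := qPoch (q ^ 2) a (n + 1) with hQ2def
      field_simp
      ring
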